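/- Let H0 be a self-adjoint operator with H0 ≥ 1 and spectral projections Q^0_L = E([1,L]), let B be a symmetric operator with D(H0) ⊆ D(B) such that H = H0 + B is self-adjoint on D(H0), assume D = D^∞(H0) = D^∞(H), and set H_L = Q^0_L H Q^0_L. Then for each k ∈ ℕ there exists s ∈ ℕ such that ‖H0^{-s}(H_L − H) H0^k‖ → 0 as L → ∞, where the norm is the operator norm of the closure of the densely defined operator H0^{-s}(H_L − H)H0^k defined on D. -/

import Mathlib

open scoped ComplexInnerProductSpace

namespace Paper

/-- An unbounded linear operator in a Hilbert space `𝓗`, encoded by a distinguished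
domain together with a globally defined linear extension of its action. -/
structure Op (𝓗 : Type*) [NormedAddCommGroup 𝓗] [InnerProductSpace ℂ 𝓗] where
  dom : Submodule ℂ 𝓗
  op : 𝓗 →ₗ[ℂ] 𝓗

variable {𝓗 : Type*} [NormedAddCommGroup 𝓗] [InnerProductSpace ℂ 𝓗]

namespace Op

/-- `T.pw k` is the `k`-th power `T^k` of `T`, as a function. -/
def pw (T : Op 𝓗) (k : ℕ) : 𝓗 → 𝓗 := (fun x => T.op x)^[k]

/-- The domain `D(Tⁿ)` of the `n`-th power of `T`. -/
def domPow (T : Op 𝓗) : ℕ → Set 𝓗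
  | 0 => Set.univ
  | n + 1 => {x | x ∈ T.dom ∧ T.op x ∈ T.domPow n}

/-- The set of C^∞-vectors `D^∞(T) = ⋂ₙ D(Tⁿ)`. -/
def Dinf (T : Op 𝓗) : Set 𝓗 := ⋂ n : ℕ, T.domPow n

/-- `T` is symmetric. -/
def Symmetric (T : Op 𝓗) : Prop :=
  ∀ x ∈ T.dom, ∀ y ∈ T.dom, ⟪T.op x, y⟫ = ⟪x, T.op y⟫

/-- Self-adjointness: densely defined, symmetric, and every vector in the domain of the
adjoint already belongs to the domain (on which the adjoint acts as the operator). -/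
def IsSelfAdjoint (T : Op 𝓗) : Prop :=
  Dense (T.dom : Set 𝓗) ∧ T.Symmetric ∧
    ∀ y z : 𝓗, (∀ x ∈ T.dom, ⟪T.op x, y⟫ = ⟪x, z⟫) → y ∈ T.dom ∧ T.op y = z

/-- `T ≥ 1`. -/
def GeOne (T : Op 𝓗) : Prop := ∀ x ∈ T.dom, ‖x‖ ^ 2 ≤ (⟪T.op x, x⟫).re

/-- The perturbed operator `T + B`, with domain `D(T)`. -/
def pert (T B : Op 𝓗) : Op 𝓗 := ⟨T.dom, T.op + B.op⟩

/-- The graph topology `t_T` on a subset `D`, generated by the seminorms `φ ↦ ‖Tⁿφ‖`,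
i.e. the initial topology for the maps `φ ↦ Tⁿφ`. -/
def graphTopOn (T : Op 𝓗) (D : Set 𝓗) : TopologicalSpace D :=
  ⨅ n : ℕ, TopologicalSpace.induced (fun φ : D => T.pw n ↑φ) inferInstance

end Op

/-- `D0` is a core for the `k`-th power of `T`. -/
def IsCorePow (T : Op 𝓗) (k : ℕ) (D0 : Set 𝓗) : Prop :=
  D0 ⊆ T.domPow k ∧ ∀ x ∈ T.domPow k, ∃ u : ℕ → 𝓗, (∀ n, u n ∈ D0) ∧
    Filter.Tendsto u Filter.atTop (nhds x) ∧
    Filter.Tendsto (fun n => T.pw k (u n)) Filter.atTop (nhds (T.pw k x))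

/-- Membership in the O*-algebra `L†(D)`: `A` maps `D` into `D`, `D ⊆ D(A*)` and
`A* D ⊆ D` (witnessed by `Adag`). -/
def MemLdag (D : Set 𝓗) (A : 𝓗 →ₗ[ℂ] 𝓗) : Prop :=
  (∀ x ∈ D, A x ∈ D) ∧
    ∃ Adag : 𝓗 →ₗ[ℂ] 𝓗, (∀ x ∈ D, Adag x ∈ D) ∧
      ∀ x ∈ D, ∀ y ∈ D, ⟪A x, y⟫ = ⟪x, Adag y⟫

/-- The operator norm of (the bounded extension of) `A`, computed on the unit ball of `D`. -/
noncomputable def opNormOn (D : Set 𝓗) (A : 𝓗 → 𝓗) : ℝ :=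
  ⨆ φ : {ψ : 𝓗 // ψ ∈ D ∧ ‖ψ‖ ≤ 1}, ‖A ↑φ‖

/-- The class `F` of positive, bounded, continuous functions on `[0,∞)` which decrease
faster than any inverse power of `x`. -/
def IsInF (f : ℝ → ℝ) : Prop :=
  Continuous f ∧ (∀ x : ℝ, 0 ≤ x → 0 < f x) ∧
    ∀ k : ℕ, ∃ M : ℝ, ∀ x : ℝ, 0 ≤ x → x ^ k * f x ≤ M

/-- The bounded measurable functional calculus of a self-adjoint operator `T` whose
spectrum is contained in `[a, ∞)`. -/
structure FnCalc (T : Op 𝓗) (a : ℝ) where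
  Φ : (ℝ → ℝ) → (𝓗 →L[ℂ] 𝓗)
  Φ_one : Φ (fun _ => 1) = 1
  Φ_add : ∀ f g : ℝ → ℝ, Measurable f → Measurable g →
    Φ (fun t => f t + g t) = Φ f + Φ g
  Φ_mul : ∀ f g : ℝ → ℝ, Measurable f → Measurable g →
    Φ (fun t => f t * g t) = (Φ f).comp (Φ g)
  Φ_symm : ∀ (f : ℝ → ℝ) (x y : 𝓗), ⟪Φ f x, y⟫ = ⟪x, Φ f y⟫
  Φ_norm : ∀ (f : ℝ → ℝ) (M : ℝ), (∀ t : ℝ, a ≤ t → |f t| ≤ M) →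
    ∀ x : 𝓗, ‖Φ f x‖ ≤ M * ‖x‖
  Φ_supp : ∀ f : ℝ → ℝ, Measurable f → (∀ t : ℝ, a ≤ t → f t = 0) → Φ f = 0
  Φ_pos : ∀ f : ℝ → ℝ, Measurable f → (∀ t : ℝ, a ≤ t → 0 ≤ f t) →
    ∀ x : 𝓗, 0 ≤ (⟪Φ f x, x⟫).re
  Φ_dom : ∀ f : ℝ → ℝ, Measurable f → (∃ M : ℝ, ∀ t : ℝ, a ≤ t → |t * f t| ≤ M) →
    ∀ x : 𝓗, Φ f x ∈ T.dom ∧ T.op (Φ f x) = Φ (fun t => t * f t) x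
  Q_tendsto : ∀ x : 𝓗, Filter.Tendsto
    (fun L : ℝ => Φ (Set.indicator (Set.Icc a L) fun _ => (1 : ℝ)) x)
    Filter.atTop (nhds x)

/-- The spectral projection `Q_L = E([a, L])` of `T`. -/
noncomputable def FnCalc.Q {T : Op 𝓗} {a : ℝ} (c : FnCalc T a) (L : ℝ) : 𝓗 →L[ℂ] 𝓗 :=
  c.Φ (Set.indicator (Set.Icc a L) fun _ => (1 : ℝ))

/-- The seminorm `A ↦ max{‖Tᵏ A f(T)‖, ‖f(T) A Tᵏ‖}` of the quasi-uniform topology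
`τ_*` on `L†(D)`. -/
noncomputable def qseminorm {T : Op 𝓗} {a : ℝ} (c : FnCalc T a) (D : Set 𝓗)
    (f : ℝ → ℝ) (k : ℕ) (A : 𝓗 →ₗ[ℂ] 𝓗) : ℝ :=
  max (opNormOn D fun φ => T.pw k (A (c.Φ f φ)))
      (opNormOn D fun φ => c.Φ f (A (T.pw k φ)))

/-- `i[A,T] = i(A T - T A)`, as a function. -/
noncomputable def commI (A T : 𝓗 → 𝓗) : 𝓗 → 𝓗 :=
  fun φ => Complex.I • (A (T φ) - T (A φ))

/-- Iterated commutators: `itComm A B j = [A, B]_j`, with `[A,B]_0 = B` and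
`[A,B]_{j+1} = [A, [A,B]_j]`. -/
def itComm (A B : 𝓗 → 𝓗) : ℕ → (𝓗 → 𝓗)
  | 0 => B
  | j + 1 => fun φ => A (itComm A B j φ) - itComm A B j (A φ)


namespace Op

@[simp] lemma pw_zero_apply (T : Op 𝓗) (x : 𝓗) : T.pw 0 x = x := rfl

lemma pw_succ (T : Op 𝓗) (n : ℕ) (x : 𝓗) : T.pw (n+1) x = T.pw n (T.op x) :=
  Function.iterate_succ_apply _ _ _

lemma pw_succ' (T : Op 𝓗) (n : ℕ) (x : 𝓗) : T.pw (n+1) x = T.op (T.pw n x) :=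
  Function.iterate_succ_apply' _ _ _

lemma pw_smul (T : Op 𝓗) (n : ℕ) (c : ℂ) (x : 𝓗) : T.pw n (c • x) = c • T.pw n x := by
  induction n with
  | zero => rfl
  | succ n ih => rw [pw_succ', pw_succ', ih, map_smul]

lemma pw_zero_vec (T : Op 𝓗) (n : ℕ) : T.pw n (0 : 𝓗) = 0 := by
  induction n with
  | zero => rfl
  | succ n ih => rw [pw_succ', ih, map_zero]

lemma pw_sub (T : Op 𝓗) (n : ℕ) (x y : 𝓗) : T.pw n (x - y) = T.pw n x - T.pw n y := by
  induction n with
  | zero => rfl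
  | succ n ih => rw [pw_succ', pw_succ', pw_succ', ih, map_sub]

lemma mem_domPow_succ {T : Op 𝓗} {x : 𝓗} {n : ℕ} :
    x ∈ T.domPow (n+1) ↔ x ∈ T.dom ∧ T.op x ∈ T.domPow n := Iff.rfl

lemma mem_Dinf {T : Op 𝓗} {x : 𝓗} : x ∈ T.Dinf ↔ ∀ n, x ∈ T.domPow n := Set.mem_iInter

lemma Dinf.mem_dom {T : Op 𝓗} {x : 𝓗} (h : x ∈ T.Dinf) : x ∈ T.dom :=
  ((mem_Dinf.1 h) 1).1

lemma Dinf.op_mem {T : Op 𝓗} {x : 𝓗} (h : x ∈ T.Dinf) : T.op x ∈ T.Dinf :=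
  mem_Dinf.2 fun n => ((mem_Dinf.1 h) (n+1)).2

lemma Dinf.pw_mem {T : Op 𝓗} {x : 𝓗} (h : x ∈ T.Dinf) (n : ℕ) : T.pw n x ∈ T.Dinf := by
  induction n with
  | zero => exact h
  | succ n ih => rw [pw_succ']; exact Dinf.op_mem ih

lemma domPow_sub {T : Op 𝓗} : ∀ (n : ℕ) {x y : 𝓗},
    x ∈ T.domPow n → y ∈ T.domPow n → x - y ∈ T.domPow n
  | 0, _, _, _, _ => trivial
  | (n+1), x, y, hx, hy =>
    ⟨sub_mem hx.1 hy.1, by rw [map_sub]; exact domPow_sub n hx.2 hy.2⟩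

lemma domPow_smul {T : Op 𝓗} : ∀ (n : ℕ) (c : ℂ) {x : 𝓗},
    x ∈ T.domPow n → c • x ∈ T.domPow n
  | 0, _, _, _ => trivial
  | (n+1), c, x, hx =>
    ⟨Submodule.smul_mem _ _ hx.1, by rw [map_smul]; exact domPow_smul n c hx.2⟩

lemma domPow_zero_mem {T : Op 𝓗} : ∀ (n : ℕ), (0 : 𝓗) ∈ T.domPow n
  | 0 => trivial
  | (n+1) => ⟨zero_mem _, by rw [map_zero]; exact domPow_zero_mem n⟩

lemma Dinf.sub {T : Op 𝓗} {x y : 𝓗} (hx : x ∈ T.Dinf) (hy : y ∈ T.Dinf) :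
    x - y ∈ T.Dinf :=
  mem_Dinf.2 fun n => domPow_sub n (mem_Dinf.1 hx n) (mem_Dinf.1 hy n)

lemma Dinf.smul {T : Op 𝓗} (c : ℂ) {x : 𝓗} (hx : x ∈ T.Dinf) : c • x ∈ T.Dinf :=
  mem_Dinf.2 fun n => domPow_smul n c (mem_Dinf.1 hx n)

lemma Dinf.zero_mem (T : Op 𝓗) : (0 : 𝓗) ∈ T.Dinf :=
  mem_Dinf.2 fun n => domPow_zero_mem n

end Op

/-- Functions bounded on `[1, ∞)`. -/
def IsBddOne (f : ℝ → ℝ) : Prop := ∃ M : ℝ, ∀ t : ℝ, 1 ≤ t → |f t| ≤ M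

lemma IsBddOne.congr {f g : ℝ → ℝ} (h : IsBddOne f) (e : ∀ t, 1 ≤ t → g t = f t) :
    IsBddOne g := by
  obtain ⟨M, hM⟩ := h
  exact ⟨M, fun t ht => (e t ht) ▸ hM t ht⟩

section FnCalcAux

open Filter Topology

variable {𝓗₂ : Type*} [NormedAddCommGroup 𝓗₂] [InnerProductSpace ℂ 𝓗₂]
variable {H0 : Op 𝓗₂}

lemma Phi_congr (c : FnCalc H0 1) {f g : ℝ → ℝ} (hf : Measurable f) (hg : Measurable g)
    (h : ∀ t : ℝ, 1 ≤ t → f t = g t) : c.Φ f = c.Φ g := by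
  have e1 : c.Φ f = c.Φ g + c.Φ (fun t => f t - g t) := by
    rw [← c.Φ_add g (fun t => f t - g t) hg (hf.sub hg)]
    congr 1; funext t; ring
  have e2 : c.Φ (fun t => f t - g t) = 0 :=
    c.Φ_supp _ (hf.sub hg) (fun t ht => by rw [h t ht]; ring)
  rw [e1, e2, add_zero]

lemma Phi_mul_apply (c : FnCalc H0 1) {f g : ℝ → ℝ} (hf : Measurable f) (hg : Measurable g)
    (x : 𝓗₂) : c.Φ (fun t => f t * g t) x = c.Φ f (c.Φ g x) := by
  rw [c.Φ_mul f g hf hg]; rfl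

lemma Phi_sub_apply (c : FnCalc H0 1) {f g : ℝ → ℝ} (hf : Measurable f) (hg : Measurable g)
    (x : 𝓗₂) : c.Φ f x - c.Φ g x = c.Φ (fun t => f t - g t) x := by
  have e1 : c.Φ f = c.Φ g + c.Φ (fun t => f t - g t) := by
    rw [← c.Φ_add g (fun t => f t - g t) hg (hf.sub hg)]
    congr 1; funext t; ring
  rw [e1]; simp

lemma Phi_eq_zero (c : FnCalc H0 1) {f : ℝ → ℝ} (hf : Measurable f)
    (h : ∀ t : ℝ, 1 ≤ t → f t = 0) (x : 𝓗₂) : c.Φ f x = 0 := by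
  rw [c.Φ_supp f hf h]; rfl

lemma Phi_one_apply (c : FnCalc H0 1) (x : 𝓗₂) : c.Φ (fun _ => 1) x = x := by
  rw [c.Φ_one]; rfl

lemma Phi_mem_dom (c : FnCalc H0 1) {f : ℝ → ℝ} (hf : Measurable f)
    (hb : IsBddOne fun t => t * f t) (x : 𝓗₂) : c.Φ f x ∈ H0.dom :=
  (c.Φ_dom f hf hb x).1

lemma Phi_op_apply (c : FnCalc H0 1) {f : ℝ → ℝ} (hf : Measurable f)
    (hb : IsBddOne fun t => t * f t) (x : 𝓗₂) :
    H0.op (c.Φ f x) = c.Φ (fun t => t * f t) x :=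
  (c.Φ_dom f hf hb x).2

lemma Phi_pw_apply (c : FnCalc H0 1) :
    ∀ (n : ℕ) (f : ℝ → ℝ), Measurable f →
      (∀ j : ℕ, 1 ≤ j → j ≤ n → IsBddOne fun t => t ^ j * f t) →
      ∀ x : 𝓗₂, H0.pw n (c.Φ f x) = c.Φ (fun t => t ^ n * f t) x := by
  intro n
  induction n with
  | zero =>
    intro f hf _ x
    rw [Op.pw_zero_apply,
      show (fun t : ℝ => t ^ 0 * f t) = f from funext fun t => by rw [pow_zero, one_mul]]
  | succ n ih =>
    intro f hf hb x
    have hb1 : IsBddOne fun t => t * f t :=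
      (hb 1 le_rfl (by omega)).congr (fun t _ => by rw [pow_one])
    rw [Op.pw_succ, Phi_op_apply c hf hb1 x,
      ih (fun t => t * f t) (measurable_id.mul hf)
        (fun j h1 h2 => (hb (j+1) (by omega) (by omega)).congr
          (fun t _ => by ring)),
      show (fun t : ℝ => t ^ n * (t * f t)) = (fun t : ℝ => t ^ (n+1) * f t) from
        funext fun t => by ring]

lemma Phi_comm_op (c : FnCalc H0 1) (hsym : H0.Symmetric) {f : ℝ → ℝ} (hf : Measurable f)
    (hb : IsBddOne fun t => t * f t) {φ : 𝓗₂} (hφ : φ ∈ H0.dom) :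
    c.Φ f (H0.op φ) = c.Φ (fun t => t * f t) φ := by
  apply ext_inner_right ℂ
  intro y
  rw [c.Φ_symm f (H0.op φ) y, hsym φ hφ (c.Φ f y) (Phi_mem_dom c hf hb y),
    (c.Φ_dom f hf hb y).2]
  exact (c.Φ_symm _ _ _).symm

lemma Phi_comm_pw (c : FnCalc H0 1) (hsym : H0.Symmetric) :
    ∀ (n : ℕ) (f : ℝ → ℝ), Measurable f →
      (∀ j : ℕ, j ≤ n → IsBddOne fun t => t ^ j * f t) →
      ∀ {φ : 𝓗₂}, φ ∈ H0.Dinf → c.Φ f (H0.pw n φ) = c.Φ (fun t => t ^ n * f t) φ := by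
  intro n
  induction n with
  | zero =>
    intro f hf _ φ _
    rw [Op.pw_zero_apply,
      show (fun t : ℝ => t ^ 0 * f t) = f from funext fun t => by rw [pow_zero, one_mul]]
  | succ n ih =>
    intro f hf hb φ hφ
    have hb1 : IsBddOne fun t => t * f t :=
      (hb 1 (by omega)).congr (fun t _ => by rw [pow_one])
    rw [Op.pw_succ', Phi_comm_op c hsym hf hb1 (Op.Dinf.mem_dom (Op.Dinf.pw_mem hφ n)),
      ih (fun t => t * f t) (measurable_id.mul hf)
        (fun j h2 => (hb (j+1) (by omega)).congr (fun t _ => by ring)) hφ,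
      show (fun t : ℝ => t ^ n * (t * f t)) = (fun t : ℝ => t ^ (n+1) * f t) from
        funext fun t => by ring]

lemma isBddOne_mul_inv : IsBddOne fun t : ℝ => t * t⁻¹ :=
  ⟨1, fun t ht => by
    show |t * t⁻¹| ≤ 1
    rw [mul_inv_cancel₀ (by linarith : t ≠ 0)]; norm_num⟩

lemma dom_inv_eq (c : FnCalc H0 1) (hsym : H0.Symmetric) {ψ : 𝓗₂} (hψ : ψ ∈ H0.dom) :
    c.Φ (fun t => t⁻¹) (H0.op ψ) = ψ := by
  rw [Phi_comm_op c hsym measurable_inv isBddOne_mul_inv hψ,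
    Phi_congr c (f := fun t : ℝ => t * t⁻¹) (g := fun _ => 1)
      (measurable_id.mul measurable_inv) measurable_const
      (fun t ht => mul_inv_cancel₀ (by linarith : t ≠ 0)), Phi_one_apply]

lemma Phi_mem_domPow (c : FnCalc H0 1) (hsym : H0.Symmetric) :
    ∀ (n : ℕ) (f : ℝ → ℝ), Measurable f → IsBddOne f →
      ∀ {ψ : 𝓗₂}, ψ ∈ H0.Dinf → c.Φ f ψ ∈ H0.domPow n := by
  intro n
  induction n with
  | zero => intro _ _ _ _ _; trivial
  | succ n ih =>
    intro f hf hb ψ hψ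
    have hψdom : ψ ∈ H0.dom := Op.Dinf.mem_dom hψ
    have hbb : IsBddOne fun t => t * (f t * t⁻¹) :=
      hb.congr (fun t ht => by
        have h0 : t ≠ 0 := by linarith
        field_simp)
    have e1 : c.Φ f ψ = c.Φ (fun t => f t * t⁻¹) (H0.op ψ) := by
      rw [Phi_mul_apply c hf measurable_inv, dom_inv_eq c hsym hψdom]
    refine ⟨?_, ?_⟩
    · rw [e1]; exact Phi_mem_dom c (hf.mul measurable_inv) hbb _
    · rw [e1, Phi_op_apply c (f := fun t => f t * t⁻¹) (hf.mul measurable_inv) hbb]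
      exact ih (fun t => t * (f t * t⁻¹)) (measurable_id.mul (hf.mul measurable_inv))
        (hb.congr (fun t ht => by
          have h0 : t ≠ 0 := by linarith
          field_simp)) (Op.Dinf.op_mem hψ)

lemma Phi_mem_Dinf_of_bdd (c : FnCalc H0 1) (hsym : H0.Symmetric) {f : ℝ → ℝ}
    (hf : Measurable f) (hb : IsBddOne f) {ψ : 𝓗₂} (hψ : ψ ∈ H0.Dinf) :
    c.Φ f ψ ∈ H0.Dinf :=
  Op.mem_Dinf.2 fun n => Phi_mem_domPow c hsym n f hf hb hψ

lemma Phi_mem_Dinf_of_all (c : FnCalc H0 1) :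
    ∀ (f : ℝ → ℝ), Measurable f → (∀ j : ℕ, IsBddOne fun t => t ^ j * f t) →
      ∀ x : 𝓗₂, c.Φ f x ∈ H0.Dinf := by
  have key : ∀ (n : ℕ) (f : ℝ → ℝ), Measurable f →
      (∀ j : ℕ, IsBddOne fun t => t ^ j * f t) →
      ∀ x : 𝓗₂, c.Φ f x ∈ H0.domPow n := by
    intro n
    induction n with
    | zero => intro _ _ _ _; trivial
    | succ n ih =>
      intro f hf hb x
      have hb1 : IsBddOne fun t => t * f t :=
        (hb 1).congr (fun t _ => by rw [pow_one])
      refine ⟨Phi_mem_dom c hf hb1 x, ?_⟩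
      rw [Phi_op_apply c hf hb1 x]
      exact ih (fun t => t * f t) (measurable_id.mul hf)
        (fun j => (hb (j+1)).congr (fun t _ => by ring)) x
  intro f hf hb x
  exact Op.mem_Dinf.2 fun n => key n f hf hb x

lemma indicator_measurable (L : ℝ) :
    Measurable (Set.indicator (Set.Icc (1:ℝ) L) fun _ => (1:ℝ)) :=
  measurable_const.indicator measurableSet_Icc

lemma indicator_abs_le (L t : ℝ) :
    |Set.indicator (Set.Icc (1:ℝ) L) (fun _ => (1:ℝ)) t| ≤ 1 := by
  rw [Set.indicator_apply]
  split <;> simp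

lemma Q_mem_Dinf (c : FnCalc H0 1) (L : ℝ) (x : 𝓗₂) : c.Q L x ∈ H0.Dinf := by
  apply Phi_mem_Dinf_of_all c _ (indicator_measurable L)
  intro j
  refine ⟨(max L 1) ^ j, fun t ht => ?_⟩
  show |t ^ j * (Set.Icc (1:ℝ) L).indicator (fun _ => (1:ℝ)) t| ≤ (max L 1) ^ j
  rw [Set.indicator_apply]
  split
  · next h =>
    rw [mul_one, abs_of_nonneg (by positivity)]
    exact pow_le_pow_left₀ (by linarith) (le_trans h.2 (le_max_left L 1)) j
  · next h =>
    rw [mul_zero, abs_zero]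
    positivity

lemma Q_norm_le (c : FnCalc H0 1) (L : ℝ) (x : 𝓗₂) : ‖c.Q L x‖ ≤ ‖x‖ := by
  have := c.Φ_norm _ 1 (fun t _ => indicator_abs_le L t) x
  simpa [FnCalc.Q] using this

lemma norm_le_of_inner_unit {v : 𝓗₂} {a : ℝ}
    (h : ∀ ψ : 𝓗₂, ‖ψ‖ ≤ 1 → ‖(⟪v, ψ⟫ : ℂ)‖ ≤ a) : ‖v‖ ≤ a := by
  by_cases hv : v = 0
  · have h0 := h 0 (by simp)
    simp only [inner_zero_right, norm_zero] at h0
    simpa [hv] using h0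
  · have hvn : (0:ℝ) < ‖v‖ := norm_pos_iff.2 hv
    have h1 := h (((‖v‖⁻¹ : ℝ) : ℂ) • v)
      (by rw [norm_smul]; simp [abs_of_pos (inv_pos.2 hvn)]
          rw [inv_mul_cancel₀ (ne_of_gt hvn)])
    have hvv : ‖(⟪v, v⟫ : ℂ)‖ = ‖v‖ * ‖v‖ := by
      rw [← inner_self_re_eq_norm, inner_self_eq_norm_mul_norm]
    rw [inner_smul_right, norm_mul, hvv, Complex.norm_real, Real.norm_eq_abs,
      abs_of_nonneg (inv_nonneg.2 (norm_nonneg v))] at h1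
    calc ‖v‖ = ‖v‖⁻¹ * (‖v‖ * ‖v‖) := by field_simp
    _ ≤ a := h1

lemma norm_le_of_inner_Dinf (c : FnCalc H0 1) {v : 𝓗₂} {a : ℝ}
    (h : ∀ ψ ∈ H0.Dinf, ‖ψ‖ ≤ 1 → ‖(⟪v, ψ⟫ : ℂ)‖ ≤ a) : ‖v‖ ≤ a := by
  apply norm_le_of_inner_unit
  intro ψ hψ
  have h2 : Tendsto (fun L : ℝ => ‖(⟪v, c.Q L ψ⟫ : ℂ)‖) atTop (𝓝 ‖(⟪v, ψ⟫ : ℂ)‖) :=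
    (Filter.Tendsto.inner tendsto_const_nhds (c.Q_tendsto ψ)).norm
  exact le_of_tendsto h2 (Filter.Eventually.of_forall fun L =>
    h _ (Q_mem_Dinf c L ψ) (le_trans (Q_norm_le c L ψ) hψ))

lemma norm_le_norm_op (hge : H0.GeOne) {x : 𝓗₂} (hx : x ∈ H0.dom) :
    ‖x‖ ≤ ‖H0.op x‖ := by
  by_cases h0 : ‖x‖ = 0
  · rw [h0]; positivity
  · have hpos : (0:ℝ) < ‖x‖ := lt_of_le_of_ne (norm_nonneg x) (Ne.symm h0)
    have h1 : ‖x‖ ^ 2 ≤ (⟪H0.op x, x⟫ : ℂ).re := hge x hx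
    have h2 : (⟪H0.op x, x⟫ : ℂ).re ≤ ‖(⟪H0.op x, x⟫ : ℂ)‖ :=
      le_trans (le_abs_self _) (Complex.abs_re_le_norm _)
    have h3 : ‖(⟪H0.op x, x⟫ : ℂ)‖ ≤ ‖H0.op x‖ * ‖x‖ := norm_inner_le_norm _ _
    have h4 : ‖x‖ * ‖x‖ ≤ ‖H0.op x‖ * ‖x‖ := by
      rw [← pow_two]; linarith
    exact le_of_mul_le_mul_right h4 hpos

lemma pw_norm_mono (hge : H0.GeOne) {φ : 𝓗₂} (hφ : φ ∈ H0.Dinf) :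
    ∀ {i j : ℕ}, i ≤ j → ‖H0.pw i φ‖ ≤ ‖H0.pw j φ‖ := by
  have step : ∀ n : ℕ, ‖H0.pw n φ‖ ≤ ‖H0.pw (n+1) φ‖ := fun n => by
    rw [Op.pw_succ']
    exact norm_le_norm_op hge (Op.Dinf.mem_dom (Op.Dinf.pw_mem hφ n))
  intro i j hij
  exact monotone_nat_of_le_succ step hij

lemma inner_pw_left (hsym : H0.Symmetric) :
    ∀ (n : ℕ) {φ ζ : 𝓗₂}, φ ∈ H0.Dinf → ζ ∈ H0.Dinf →
      (⟪H0.pw n φ, ζ⟫ : ℂ) = ⟪φ, H0.pw n ζ⟫ := by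
  intro n
  induction n with
  | zero => intro φ ζ _ _; rfl
  | succ n ih =>
    intro φ ζ hφ hζ
    rw [Op.pw_succ' H0 n φ, hsym _ (Op.Dinf.mem_dom (Op.Dinf.pw_mem hφ n)) ζ
      (Op.Dinf.mem_dom hζ), ih hφ (Op.Dinf.op_mem hζ), ← Op.pw_succ]
  

lemma Hinv_eq (c : FnCalc H0 1) (hsym : H0.Symmetric) (Hinv : 𝓗₂ →L[ℂ] 𝓗₂)
    (hinv_left : ∀ x ∈ H0.dom, Hinv (H0.op x) = x) (x : 𝓗₂) :
    Hinv x = c.Φ (fun t => t⁻¹) x := by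
  have hb : IsBddOne fun t : ℝ => t * t⁻¹ := isBddOne_mul_inv
  have h1 : c.Φ (fun t => t⁻¹) x ∈ H0.dom := Phi_mem_dom c measurable_inv hb x
  have h2 : H0.op (c.Φ (fun t => t⁻¹) x) = x := by
    rw [Phi_op_apply c measurable_inv hb x,
      Phi_congr c (f := fun t : ℝ => t * t⁻¹) (g := fun _ => 1)
        (measurable_id.mul measurable_inv) measurable_const
        (fun t ht => mul_inv_cancel₀ (by linarith : t ≠ 0)), Phi_one_apply]
  conv_lhs => rw [← h2]
  rw [hinv_left _ h1]

lemma Hinv_pow_eq (c : FnCalc H0 1) (hsym : H0.Symmetric) (Hinv : 𝓗₂ →L[ℂ] 𝓗₂)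
    (hinv_left : ∀ x ∈ H0.dom, Hinv (H0.op x) = x) (s : ℕ) (x : 𝓗₂) :
    (Hinv ^ s) x = c.Φ (fun t => (t⁻¹) ^ s) x := by
  induction s generalizing x with
  | zero =>
    rw [pow_zero,
      show (fun t : ℝ => (t⁻¹) ^ 0) = (fun _ : ℝ => (1:ℝ)) from funext fun t => pow_zero _,
      Phi_one_apply]
    rfl
  | succ s ih =>
    rw [pow_succ, ContinuousLinearMap.mul_apply, ih (Hinv x),
      Hinv_eq c hsym Hinv hinv_left x, ← Phi_mul_apply c (by fun_prop) measurable_inv,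
      show (fun t : ℝ => (t⁻¹) ^ s * t⁻¹) = (fun t : ℝ => (t⁻¹) ^ (s+1)) from
        funext fun t => (pow_succ _ _).symm]

lemma Hinv_pw_cancel (Hinv : 𝓗₂ →L[ℂ] 𝓗₂)
    (hinv_left : ∀ x ∈ H0.dom, Hinv (H0.op x) = x) :
    ∀ (n : ℕ) {φ : 𝓗₂}, φ ∈ H0.Dinf → (Hinv ^ n) (H0.pw n φ) = φ := by
  intro n
  induction n with
  | zero => intro φ _; rw [pow_zero]; rfl
  | succ n ih =>
    intro φ hφ
    rw [pow_succ, ContinuousLinearMap.mul_apply, Op.pw_succ',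
      hinv_left _ (Op.Dinf.mem_dom (Op.Dinf.pw_mem hφ n)), ih hφ]

end FnCalcAux

section StarLemma

open Filter Topology

variable {𝓗₃ : Type*} [NormedAddCommGroup 𝓗₃] [InnerProductSpace ℂ 𝓗₃] [CompleteSpace 𝓗₃]
variable {H0 B : Op 𝓗₃}

lemma isClosed_graph_of_selfAdjoint (hsa0 : H0.IsSelfAdjoint) :
    IsClosed {q : 𝓗₃ × 𝓗₃ | q.1 ∈ H0.dom ∧ H0.op q.1 = q.2} := by
  apply IsSeqClosed.isClosed
  intro x q hmem hlim
  have h1 : Tendsto (fun n => (x n).1) atTop (𝓝 q.1) := (continuous_fst.tendsto q).comp hlim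
  have h2 : Tendsto (fun n => (x n).2) atTop (𝓝 q.2) := (continuous_snd.tendsto q).comp hlim
  apply hsa0.2.2
  intro u hu
  have e1 : Tendsto (fun n => (⟪H0.op u, (x n).1⟫ : ℂ)) atTop (𝓝 ⟪H0.op u, q.1⟫) :=
    Filter.Tendsto.inner tendsto_const_nhds h1
  have e2 : Tendsto (fun n => (⟪u, (x n).2⟫ : ℂ)) atTop (𝓝 ⟪u, q.2⟫) :=
    Filter.Tendsto.inner tendsto_const_nhds h2
  have e3 : (fun n => (⟪H0.op u, (x n).1⟫ : ℂ)) = fun n => (⟪u, (x n).2⟫ : ℂ) := by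
    funext n
    rw [hsa0.2.1 u hu _ (hmem n).1, (hmem n).2]
  rw [e3] at e1
  exact tendsto_nhds_unique e1 e2

set_option maxHeartbeats 1000000 in
lemma star_bound (hsa0 : H0.IsSelfAdjoint) (hge : H0.GeOne)
    (hsaH : (H0.pert B).IsSelfAdjoint) (c : FnCalc H0 1)
    (hDD : H0.Dinf = (H0.pert B).Dinf) (p : ℕ) :
    ∃ (m : ℕ) (C : ℝ), 0 < C ∧ 1 ≤ m ∧
      ∀ χ ∈ H0.Dinf, ‖H0.pw (p+1) ((H0.pert B).op χ)‖ ≤ C * ‖H0.pw m χ‖ := by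
  classical
  have hsym0 : H0.Symmetric := hsa0.2.1
  letI : MetricSpace (ℕ → 𝓗₃) := PiCountable.metricSpace
  haveI : CompleteSpace (ℕ → 𝓗₃) :=
    inferInstanceAs (@CompleteSpace (ℕ → 𝓗₃) (Pi.uniformSpace _))
  set G : Set (𝓗₃ × 𝓗₃) := {q | q.1 ∈ H0.dom ∧ H0.op q.1 = q.2} with hG
  set S : Set (ℕ → 𝓗₃) := {x | ∀ n, (x n, x (n+1)) ∈ G} with hSdef
  have hSclosed : IsClosed S := by
    have hrepr : S = ⋂ n : ℕ, (fun x : ℕ → 𝓗₃ => (x n, x (n+1))) ⁻¹' G := by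
      ext x; simp [hSdef, Set.mem_iInter]
    rw [hrepr]
    exact isClosed_iInter fun n =>
      (isClosed_graph_of_selfAdjoint hsa0).preimage
        ((continuous_apply n).prodMk (continuous_apply (n+1)))
  have hmemS : ∀ φ : 𝓗₃, φ ∈ H0.Dinf → (fun n => H0.pw n φ) ∈ S := by
    intro φ hφ n
    exact ⟨Op.Dinf.mem_dom (Op.Dinf.pw_mem hφ n), (Op.pw_succ' H0 n φ).symm⟩
  have hS0 : ∀ x ∈ S, x 0 ∈ H0.Dinf := by
    have key : ∀ (n : ℕ) (y : ℕ → 𝓗₃), y ∈ S → y 0 ∈ H0.domPow n := by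
      intro n
      induction n with
      | zero => intro y _; trivial
      | succ n ih =>
        intro y hy
        exact ⟨(hy 0).1, by rw [(hy 0).2]; exact ih (fun j => y (j+1)) (fun j => hy (j+1))⟩
    intro x hx
    exact Op.mem_Dinf.2 fun n => key n x hx
  haveI : Nonempty S := ⟨⟨fun _ => 0, fun n => ⟨zero_mem _, by simp⟩⟩⟩
  haveI : CompleteSpace S := hSclosed.completeSpace_coe
  set P : 𝓗₃ → 𝓗₃ := fun ω => (H0.pert B).op (H0.pw (p+1) ω) with hP
  have key : ∀ (χ : 𝓗₃), χ ∈ H0.Dinf → ∀ (ω : 𝓗₃), ω ∈ H0.Dinf →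
      (⟪χ, P ω⟫ : ℂ) = ⟪H0.pw (p+1) ((H0.pert B).op χ), ω⟫ := by
    intro χ hχ ω hω
    have hχH : χ ∈ (H0.pert B).Dinf := hDD ▸ hχ
    have hHχ : (H0.pert B).op χ ∈ H0.Dinf := by
      rw [hDD]; exact Op.Dinf.op_mem hχH
    calc (⟪χ, P ω⟫ : ℂ)
        = ⟪(H0.pert B).op χ, H0.pw (p+1) ω⟫ :=
          (hsaH.2.1 χ ((Op.Dinf.mem_dom hχ : χ ∈ H0.dom)) _
            ((Op.Dinf.mem_dom (Op.Dinf.pw_mem hω (p+1)) :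
              H0.pw (p+1) ω ∈ H0.dom))).symm
      _ = ⟪H0.pw (p+1) ((H0.pert B).op χ), ω⟫ :=
          (inner_pw_left hsym0 (p+1) hHχ hω).symm
  set F : ℕ → Set S := fun j => {x | ∀ ω, ω ∈ H0.Dinf → ‖ω‖ ≤ 1 →
      ‖(⟪(x : ℕ → 𝓗₃) 0, P ω⟫ : ℂ)‖ ≤ (j : ℝ) * ‖(x : ℕ → 𝓗₃) j‖ + j} with hFdef
  have hFclosed : ∀ j, IsClosed (F j) := by
    intro j
    have hrepr : F j = ⋂ (ω : 𝓗₃) (_ : ω ∈ H0.Dinf) (_ : ‖ω‖ ≤ 1),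
        {x : S | ‖(⟪(x : ℕ → 𝓗₃) 0, P ω⟫ : ℂ)‖ ≤ (j : ℝ) * ‖(x : ℕ → 𝓗₃) j‖ + j} := by
      ext x; simp [hFdef, Set.mem_iInter]
    rw [hrepr]
    refine isClosed_iInter fun ω => isClosed_iInter fun _ => isClosed_iInter fun _ => ?_
    exact isClosed_le
      ((Continuous.inner ((continuous_apply 0).comp continuous_subtype_val)
        continuous_const).norm)
      ((continuous_const.mul
        (((continuous_apply j).comp continuous_subtype_val).norm)).add continuous_const)
  have hcover : ⋃ j, F j = Set.univ := by
    apply Set.eq_univ_of_forall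
    intro x
    have hx0 : (x : ℕ → 𝓗₃) 0 ∈ H0.Dinf := hS0 _ x.2
    set R := ‖H0.pw (p+1) ((H0.pert B).op ((x : ℕ → 𝓗₃) 0))‖ with hR
    refine Set.mem_iUnion.2 ⟨⌈R⌉₊, ?_⟩
    intro ω hω hω1
    rw [key _ hx0 ω hω]
    calc ‖(⟪H0.pw (p+1) ((H0.pert B).op ((x : ℕ → 𝓗₃) 0)), ω⟫ : ℂ)‖
        ≤ R * ‖ω‖ := norm_inner_le_norm _ _
      _ ≤ R := by nlinarith [norm_nonneg (H0.pw (p+1) ((H0.pert B).op ((x : ℕ → 𝓗₃) 0)))]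
      _ ≤ (⌈R⌉₊ : ℝ) := Nat.le_ceil R
      _ ≤ (⌈R⌉₊ : ℝ) * ‖(x : ℕ → 𝓗₃) ⌈R⌉₊‖ + ⌈R⌉₊ :=
          le_add_of_nonneg_left (by positivity)
  obtain ⟨j, hj⟩ := nonempty_interior_of_iUnion_of_closed hFclosed hcover
  obtain ⟨xb, hxb⟩ := hj
  obtain ⟨ε, hε, hball⟩ := Metric.isOpen_iff.1 isOpen_interior xb hxb
  obtain ⟨N, hN⟩ := exists_pow_lt_of_lt_one (by positivity : (0:ℝ) < ε/4)
    (by norm_num : (1:ℝ)/2 < 1)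
  set t : ℝ := ε / (4 * (N + 1)) with ht
  have htpos : 0 < t := by positivity
  -- distance estimate in the product space
  have hdistle : ∀ (u w : ℕ → 𝓗₃) (δ : ℝ), 0 ≤ δ → (∀ n, n < N → dist (u n) (w n) ≤ δ) →
      dist u w ≤ N * δ + 2 * (1/2:ℝ)^N := by
    intro u w δ hδ h
    have hsum := PiCountable.dist_summable u w
    simp only [Encodable.encode_nat] at hsum ⊢
    rw [PiCountable.dist_eq_tsum]
    simp only [Encodable.encode_nat]
    rw [← Summable.sum_add_tsum_nat_add N hsum]
    have hhead : (∑ i ∈ Finset.range N, min ((1/2:ℝ)^i) (dist (u i) (w i))) ≤ N * δ := by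
      calc (∑ i ∈ Finset.range N, min ((1/2:ℝ)^i) (dist (u i) (w i)))
          ≤ ∑ i ∈ Finset.range N, δ := Finset.sum_le_sum fun i hi =>
            le_trans (min_le_right _ _) (h i (Finset.mem_range.1 hi))
        _ = N * δ := by rw [Finset.sum_const, Finset.card_range, nsmul_eq_mul]
    have htail : (∑' i : ℕ, min ((1/2:ℝ)^(i+N)) (dist (u (i+N)) (w (i+N))))
        ≤ 2 * (1/2:ℝ)^N := by
      have h1 : (∑' i : ℕ, min ((1/2:ℝ)^(i+N)) (dist (u (i+N)) (w (i+N))))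
          ≤ ∑' i : ℕ, (1/2:ℝ)^(i+N) := by
        refine Summable.tsum_le_tsum (fun i => min_le_left _ _) ?_ ?_
        · simpa only [one_div] using (summable_nat_add_iff N).2 hsum
        · exact (summable_nat_add_iff N).2 summable_geometric_two
      have h2 : (∑' i : ℕ, (1/2:ℝ)^(i+N)) = 2 * (1/2:ℝ)^N := by
        have e : ∀ i : ℕ, ((1:ℝ)/2)^(i+N) = (1/2:ℝ)^N * (1/2:ℝ)^i := fun i => by
          rw [pow_add]; ring
        rw [tsum_congr e, tsum_mul_left, tsum_geometric_two]
        ring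
      rw [h2] at h1
      exact h1
    simpa only [one_div] using add_le_add hhead htail
  -- bound for normalized vectors
  set K : ℝ := (2*(j:ℝ)*‖(xb : ℕ → 𝓗₃) j‖ + 2*j) / t with hK
  have hK0 : 0 ≤ K := by positivity
  have hnormed : ∀ χ : 𝓗₃, χ ∈ H0.Dinf → ‖H0.pw N χ‖ = 1 →
      ‖H0.pw (p+1) ((H0.pert B).op χ)‖ ≤ ((j:ℝ) + K) * ‖H0.pw (max j N) χ‖ := by
    intro χ hχ hχN
    set y : ℕ → 𝓗₃ := fun n => (xb : ℕ → 𝓗₃) n + ((t:ℝ) : ℂ) • H0.pw n χ with hy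
    have hyS : y ∈ S := by
      intro n
      refine ⟨add_mem (xb.2 n).1 (Submodule.smul_mem _ _
        (Op.Dinf.mem_dom (Op.Dinf.pw_mem hχ n))), ?_⟩
      show H0.op (y n) = y (n+1)
      rw [hy]
      simp only [map_add, map_smul]
      rw [(xb.2 n).2, ← Op.pw_succ']
    have hydist : dist y (xb : ℕ → 𝓗₃) < ε := by
      have hterm : ∀ n, n < N → dist (y n) ((xb : ℕ → 𝓗₃) n) ≤ t := by
        intro n hn
        rw [hy]
        simp only [dist_eq_norm, add_sub_cancel_left]
        rw [norm_smul, Complex.norm_real, Real.norm_eq_abs, abs_of_pos htpos]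
        calc t * ‖H0.pw n χ‖ ≤ t * ‖H0.pw N χ‖ := by
              have := pw_norm_mono hge hχ (le_of_lt hn)
              nlinarith
          _ = t := by rw [hχN, mul_one]
      calc dist y (xb : ℕ → 𝓗₃) ≤ N * t + 2 * (1/2:ℝ)^N :=
            hdistle _ _ t (le_of_lt htpos) hterm
        _ < ε := by
            have hNp : (0:ℝ) < 4*(N+1) := by positivity
            have h1 : (N:ℝ) * t < ε/2 := by
              rw [ht, ← mul_div_assoc, div_lt_div_iff₀ hNp (by norm_num : (0:ℝ) < 2)]
              have hN0 : (0:ℝ) ≤ N := Nat.cast_nonneg N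
              nlinarith
            have h2 : 2 * (1/2:ℝ)^N < ε/2 := by nlinarith
            linarith
    have hyF : (⟨y, hyS⟩ : S) ∈ F j := interior_subset (hball (by
      rw [Metric.mem_ball, Subtype.dist_eq]
      exact hydist))
    have hxbF : xb ∈ F j := interior_subset hxb
    have hinner : ∀ ω, ω ∈ H0.Dinf → ‖ω‖ ≤ 1 →
        ‖(⟪χ, P ω⟫ : ℂ)‖ ≤ ((j:ℝ) + K) * ‖H0.pw (max j N) χ‖ := by
      intro ω hω hω1
      have h1 := hyF ω hω hω1
      have h2 := hxbF ω hω hω1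
      have hy0 : (⟪y 0, P ω⟫ : ℂ) = ⟪(xb : ℕ → 𝓗₃) 0, P ω⟫ + ((t:ℝ) : ℂ) * ⟪χ, P ω⟫ := by
        rw [hy]
        simp only [Op.pw_zero_apply]
        rw [inner_add_left, inner_smul_left, Complex.conj_ofReal]
      have hsize : t * ‖(⟪χ, P ω⟫ : ℂ)‖
          ≤ (j:ℝ) * ‖y j‖ + j + ((j:ℝ) * ‖(xb : ℕ → 𝓗₃) j‖ + j) := by
        have e0 : t * ‖(⟪χ, P ω⟫ : ℂ)‖ = ‖((t:ℝ) : ℂ) * ⟪χ, P ω⟫‖ := by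
          rw [norm_mul, Complex.norm_real, Real.norm_eq_abs, abs_of_pos htpos]
        rw [e0]
        have e : ((t:ℝ) : ℂ) * ⟪χ, P ω⟫ = (⟪y 0, P ω⟫ : ℂ) - ⟪(xb : ℕ → 𝓗₃) 0, P ω⟫ := by
          rw [hy0]; ring
        rw [e]
        calc ‖(⟪y 0, P ω⟫ : ℂ) - ⟪(xb : ℕ → 𝓗₃) 0, P ω⟫‖
            ≤ ‖(⟪y 0, P ω⟫ : ℂ)‖ + ‖(⟪(xb : ℕ → 𝓗₃) 0, P ω⟫ : ℂ)‖ := norm_sub_le _ _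
          _ ≤ (j:ℝ) * ‖y j‖ + j + ((j:ℝ) * ‖(xb : ℕ → 𝓗₃) j‖ + j) := add_le_add h1 h2
      have hyj : ‖y j‖ ≤ ‖(xb : ℕ → 𝓗₃) j‖ + t * ‖H0.pw j χ‖ := by
        rw [hy]
        refine le_trans (norm_add_le _ _) ?_
        rw [norm_smul, Complex.norm_real, Real.norm_eq_abs, abs_of_pos htpos]
      have hKt : K * t = 2*(j:ℝ)*‖(xb : ℕ → 𝓗₃) j‖ + 2*j := by
        rw [hK]; field_simp
      have h3 : t * ‖(⟪χ, P ω⟫ : ℂ)‖ ≤ t * ((j:ℝ) * ‖H0.pw j χ‖ + K) := by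
        have hj0 : (0:ℝ) ≤ j := Nat.cast_nonneg j
        nlinarith [hsize, hyj, hKt]
      have hdiv : ‖(⟪χ, P ω⟫ : ℂ)‖ ≤ (j:ℝ) * ‖H0.pw j χ‖ + K :=
        le_of_mul_le_mul_left h3 htpos
      have hmono1 : ‖H0.pw j χ‖ ≤ ‖H0.pw (max j N) χ‖ :=
        pw_norm_mono hge hχ (le_max_left _ _)
      have hmono2 : (1:ℝ) ≤ ‖H0.pw (max j N) χ‖ := by
        rw [← hχN]; exact pw_norm_mono hge hχ (le_max_right _ _)
      calc ‖(⟪χ, P ω⟫ : ℂ)‖ ≤ (j:ℝ) * ‖H0.pw j χ‖ + K := hdiv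
        _ ≤ (j:ℝ) * ‖H0.pw (max j N) χ‖ + K * ‖H0.pw (max j N) χ‖ := by
            have hj0 : (0:ℝ) ≤ (j:ℝ) := Nat.cast_nonneg j
            nlinarith
        _ = ((j:ℝ) + K) * ‖H0.pw (max j N) χ‖ := by ring
    apply norm_le_of_inner_Dinf c
    intro ω hω hω1
    rw [← key χ hχ ω hω]
    exact hinner ω hω hω1
  -- general vectors, by scaling
  refine ⟨max (max j N) 1, (j:ℝ) + K + 1, by positivity, le_max_right _ _, ?_⟩
  intro χ hχ
  by_cases hR : ‖H0.pw N χ‖ = 0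
  · have hχ0 : χ = 0 := by
      have h0 : ‖H0.pw 0 χ‖ ≤ ‖H0.pw N χ‖ := pw_norm_mono hge hχ (Nat.zero_le N)
      rw [Op.pw_zero_apply, hR] at h0
      exact norm_eq_zero.1 (le_antisymm h0 (norm_nonneg χ))
    simp [hχ0, Op.pw_zero_vec]
  · have hRpos : 0 < ‖H0.pw N χ‖ := lt_of_le_of_ne (norm_nonneg _) (Ne.symm hR)
    set R := ‖H0.pw N χ‖ with hRdef
    have hnorm' : ‖H0.pw N (((R⁻¹ : ℝ) : ℂ) • χ)‖ = 1 := by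
      rw [Op.pw_smul, norm_smul, Complex.norm_real, Real.norm_eq_abs,
        abs_of_pos (inv_pos.2 hRpos), ← hRdef, inv_mul_cancel₀ (ne_of_gt hRpos)]
    have h := hnormed (((R⁻¹ : ℝ) : ℂ) • χ) (Op.Dinf.smul _ hχ) hnorm'
    simp only [map_smul, Op.pw_smul, norm_smul, Complex.norm_real, Real.norm_eq_abs,
      abs_of_pos (inv_pos.2 hRpos)] at h
    have h2 : ‖H0.pw (p+1) ((H0.pert B).op χ)‖ ≤ ((j:ℝ) + K) * ‖H0.pw (max j N) χ‖ := by
      calc ‖H0.pw (p+1) ((H0.pert B).op χ)‖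
          = R * (R⁻¹ * ‖H0.pw (p+1) ((H0.pert B).op χ)‖) := by
            field_simp
        _ ≤ R * (((j:ℝ) + K) * (R⁻¹ * ‖H0.pw (max j N) χ‖)) :=
            mul_le_mul_of_nonneg_left h (le_of_lt hRpos)
        _ = ((j:ℝ) + K) * (R * R⁻¹ * ‖H0.pw (max j N) χ‖) := by ring
        _ = ((j:ℝ) + K) * ‖H0.pw (max j N) χ‖ := by
            rw [mul_inv_cancel₀ (ne_of_gt hRpos), one_mul]
    calc ‖H0.pw (p+1) ((H0.pert B).op χ)‖ ≤ ((j:ℝ) + K) * ‖H0.pw (max j N) χ‖ := h2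
      _ ≤ ((j:ℝ) + K + 1) * ‖H0.pw (max (max j N) 1) χ‖ := by
          have hm : ‖H0.pw (max j N) χ‖ ≤ ‖H0.pw (max (max j N) 1) χ‖ :=
            pw_norm_mono hge hχ (le_max_left _ _)
          have h0 : (0:ℝ) ≤ ‖H0.pw (max j N) χ‖ := norm_nonneg _
          have hj0 : (0:ℝ) ≤ (j:ℝ) + K := by positivity
          nlinarith [norm_nonneg (H0.pw (max (max j N) 1) χ)]

end StarLemma

section RealHelpers

lemma pow_inv_reduce {t : ℝ} (ht : 1 ≤ t) {a s : ℕ} (has : a ≤ s) :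
    t ^ a * (t⁻¹) ^ s = (t ^ (s - a))⁻¹ := by
  have ht0 : t ≠ 0 := by linarith
  rw [inv_pow, show t ^ s = t ^ a * t ^ (s - a) by rw [← pow_add]; congr 1; omega,
    mul_inv, ← mul_assoc, mul_inv_cancel₀ (pow_ne_zero a ht0), one_mul]

lemma inv_pow_le_inv_pow {L t : ℝ} (hL : 1 ≤ L) (hLt : L ≤ t) (e : ℕ) :
    (t ^ e)⁻¹ ≤ (L ^ e)⁻¹ := by
  have h1 : (0:ℝ) < L ^ e := by positivity
  exact inv_anti₀ h1 (pow_le_pow_left₀ (by linarith) hLt e)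

lemma inv_pow_le_one {L : ℝ} (hL : 1 ≤ L) (e : ℕ) : (L ^ e)⁻¹ ≤ 1 := by
  have h1 : (1:ℝ) ≤ L ^ e := by
    calc (1:ℝ) = 1 ^ e := (one_pow e).symm
    _ ≤ L ^ e := pow_le_pow_left₀ (by norm_num) hL e
  exact inv_le_one_of_one_le₀ h1

lemma indicator_one_of {L t : ℝ} (h1 : 1 ≤ t) (h2 : t ≤ L) :
    Set.indicator (Set.Icc (1:ℝ) L) (fun _ => (1:ℝ)) t = 1 :=
  Set.indicator_of_mem (Set.mem_Icc.2 ⟨h1, h2⟩) _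

lemma indicator_zero_of {L t : ℝ} (h2 : L < t) :
    Set.indicator (Set.Icc (1:ℝ) L) (fun _ => (1:ℝ)) t = 0 :=
  Set.indicator_of_notMem (fun hmem => absurd (Set.mem_Icc.1 hmem).2 (not_le.2 h2)) _

lemma g_decay (L t : ℝ) (hL : 1 ≤ L) (ht : 1 ≤ t) (a s : ℕ) (has : a ≤ s) :
    |t ^ a * (t⁻¹) ^ s * (Set.indicator (Set.Icc (1:ℝ) L) (fun _ => (1:ℝ)) t - 1)|
      ≤ (L ^ (s - a))⁻¹ := by
  by_cases hc : t ≤ L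
  · rw [indicator_one_of ht hc]
    simp only [sub_self, mul_zero, abs_zero]
    positivity
  · rw [indicator_zero_of (not_le.1 hc)]
    rw [show t ^ a * (t⁻¹) ^ s * (0 - 1) = -(t ^ a * (t⁻¹) ^ s) by ring, abs_neg,
      pow_inv_reduce ht has, abs_of_nonneg (by positivity)]
    exact inv_pow_le_inv_pow hL (le_of_lt (not_le.1 hc)) _

lemma q_decay (L t : ℝ) (hL : 1 ≤ L) (ht : 1 ≤ t) (a : ℕ) :
    |t ^ a * Set.indicator (Set.Icc (1:ℝ) L) (fun _ => (1:ℝ)) t| ≤ L ^ a := by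
  by_cases hc : t ≤ L
  · rw [indicator_one_of ht hc, mul_one, abs_of_nonneg (by positivity)]
    exact pow_le_pow_left₀ (by linarith) hc a
  · rw [indicator_zero_of (not_le.1 hc), mul_zero, abs_zero]
    positivity

lemma invpow_decay (t : ℝ) (ht : 1 ≤ t) (a s : ℕ) (has : a ≤ s) :
    |t ^ a * (t⁻¹) ^ s| ≤ 1 := by
  rw [pow_inv_reduce ht has, abs_of_nonneg (by positivity)]
  exact inv_pow_le_one ht _

lemma qinv_decay (L t : ℝ) (hL : 1 ≤ L) (ht : 1 ≤ t) (k : ℕ) :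
    |t ^ k * Set.indicator (Set.Icc (1:ℝ) L) (fun _ => (1:ℝ)) t * (t⁻¹) ^ (k+1) - t⁻¹|
      ≤ L⁻¹ := by
  have hL0 : (0:ℝ) < L := by linarith
  by_cases hc : t ≤ L
  · rw [indicator_one_of ht hc, mul_one,
      show t ^ k * (t⁻¹) ^ (k+1) = t ^ k * (t⁻¹) ^ (k+1) by rfl]
    have e : t ^ k * (t⁻¹) ^ (k+1) = t⁻¹ := by
      rw [pow_inv_reduce ht (by omega), show k + 1 - k = 1 by omega, pow_one]
    rw [e, sub_self, abs_zero]
    positivity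
  · rw [indicator_zero_of (not_le.1 hc)]
    rw [show t ^ k * 0 * (t⁻¹) ^ (k+1) - t⁻¹ = -t⁻¹ by ring, abs_neg,
      abs_of_nonneg (by positivity)]
    exact inv_anti₀ hL0 (le_of_lt (not_le.1 hc))

end RealHelpers

section OpNormHelpers

variable {𝓗₄ : Type*} [NormedAddCommGroup 𝓗₄] [InnerProductSpace ℂ 𝓗₄]

lemma opNormOn_nonneg (D : Set 𝓗₄) (A : 𝓗₄ → 𝓗₄) : 0 ≤ opNormOn D A :=
  Real.iSup_nonneg fun _ => norm_nonneg _

lemma opNormOn_le (D : Set 𝓗₄) (A : 𝓗₄ → 𝓗₄) {a : ℝ} (ha : 0 ≤ a)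
    (h : ∀ x ∈ D, ‖x‖ ≤ 1 → ‖A x‖ ≤ a) : opNormOn D A ≤ a :=
  Real.iSup_le (fun φ => h φ.1 φ.2.1 φ.2.2) ha

end OpNormHelpers
variable {𝓗 : Type*} [NormedAddCommGroup 𝓗] [InnerProductSpace ℂ 𝓗] [CompleteSpace 𝓗]

set_option maxHeartbeats 1000000 in
/-- (Lemma 59.1) With `H_L = Q⁰_L H Q⁰_L`, for each `k ∈ ℕ` there
exists `s ∈ ℕ` such that `‖H0^{-s} (H_L - H) H0^k‖ → 0` as `L → ∞`. -/
theorem stmt14 (H0 B : Op 𝓗) (hsa0 : H0.IsSelfAdjoint) (hge : H0.GeOne)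
    (hBsymm : B.Symmetric) (hdomB : (H0.dom : Set 𝓗) ⊆ B.dom)
    (hsaH : (H0.pert B).IsSelfAdjoint)
    (S0 : FnCalc H0 1)
    -- `Hinv` is the bounded inverse `H0⁻¹`
    (Hinv : 𝓗 →L[ℂ] 𝓗)
    (hinv_mem : ∀ x : 𝓗, Hinv x ∈ H0.dom)
    (hinv_right : ∀ x : 𝓗, H0.op (Hinv x) = x)
    (hinv_left : ∀ x ∈ H0.dom, Hinv (H0.op x) = x)
    (D : Set 𝓗) (hD0 : D = H0.Dinf) (hDH : D = (H0.pert B).Dinf) :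
    ∀ k : ℕ, ∃ s : ℕ,
      Filter.Tendsto (fun L : ℝ => opNormOn D (fun φ =>
          (Hinv ^ s) (S0.Q L ((H0.pert B).op (S0.Q L (H0.pw k φ)))
            - (H0.pert B).op (H0.pw k φ))))
        Filter.atTop (nhds 0) := by
  subst hD0
  intro k
  have hsym0 : H0.Symmetric := hsa0.2.1
  obtain ⟨m, C, hC, hm1, hstar⟩ := star_bound hsa0 hge hsaH S0 hDH k
  refine ⟨k + m + 1, ?_⟩
  set s : ℕ := k + m + 1 with hs
  have hinvs : Measurable (fun t : ℝ => (t⁻¹) ^ s) := measurable_inv.pow_const s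
  have hmain : ∀ L : ℝ, 1 ≤ L → ∀ φ ∈ H0.Dinf, ‖φ‖ ≤ 1 →
      ‖(Hinv ^ s) (S0.Q L ((H0.pert B).op (S0.Q L (H0.pw k φ)))
          - (H0.pert B).op (H0.pw k φ))‖ ≤ (2*C+3)/L := by
    intro L hL φ hφ hφ1
    have hL0 : (0:ℝ) < L := by linarith
    set q : ℝ → ℝ := Set.indicator (Set.Icc (1:ℝ) L) (fun _ => (1:ℝ)) with hqdef
    have hqm : Measurable q := indicator_measurable L
    have hq_le : ∀ t : ℝ, |q t| ≤ 1 := indicator_abs_le L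
    have hgm : Measurable (fun t : ℝ => q t - 1) := hqm.sub measurable_const
    have hm_tinv : Measurable (fun t : ℝ => t * (t⁻¹)^s) := measurable_id.mul hinvs
    have hm_tq : Measurable (fun t : ℝ => t * q t) := measurable_id.mul hqm
    have hm_tkq : Measurable (fun t : ℝ => t^k * q t) := (measurable_id.pow_const k).mul hqm
    have hm_invk1 : Measurable (fun t : ℝ => (t⁻¹)^(k+1)) := measurable_inv.pow_const (k+1)
    set u : 𝓗 := H0.pw k φ with hu
    have huD : u ∈ H0.Dinf := Op.Dinf.pw_mem hφ k
    have hQPhi : ∀ x : 𝓗, S0.Q L x = S0.Φ q x := fun x => rfl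
    have hgsub : ∀ x : 𝓗, S0.Q L x - x = S0.Φ (fun t => q t - 1) x := by
      intro x
      rw [hQPhi x]
      have h := Phi_sub_apply S0 (f := q) (g := fun _ => (1:ℝ)) hqm measurable_const x
      rw [Phi_one_apply] at h
      exact h
    set v : 𝓗 := S0.Q L u with hv
    have hvD : v ∈ H0.Dinf := Q_mem_Dinf S0 L u
    have hvdom : v ∈ H0.dom := Op.Dinf.mem_dom hvD
    have hopapply : ∀ x : 𝓗, (H0.pert B).op x = H0.op x + B.op x := fun x => rfl
    set w : 𝓗 := S0.Φ (fun t => q t - 1) u with hw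
    have hwsub : w = S0.Φ q u - u := by
      rw [hw, ← hgsub u, hQPhi u]
    have hΦquD : S0.Φ q u ∈ H0.Dinf :=
      Phi_mem_Dinf_of_bdd S0 hsym0 hqm ⟨1, fun t _ => hq_le t⟩ huD
    have hwD : w ∈ H0.Dinf := by rw [hwsub]; exact Op.Dinf.sub hΦquD huD
    have hwdom : w ∈ H0.dom := Op.Dinf.mem_dom hwD
    -- the decomposition H_L - H = (Q_L - 1) B Q_L + H (Q_L - 1) on `u`
    have hdecomp : S0.Q L ((H0.pert B).op v) - (H0.pert B).op u
        = S0.Φ (fun t => q t - 1) (B.op v) + (H0.pert B).op w := by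
      have e1 : S0.Q L ((H0.pert B).op v) - (H0.pert B).op v
          = S0.Φ (fun t => q t - 1) ((H0.pert B).op v) := hgsub _
      have e2 : (H0.pert B).op v - (H0.pert B).op u = (H0.pert B).op w := by
        rw [← map_sub]
        congr 1
        rw [hw]
        exact hgsub u
      have e4 : S0.Φ (fun t => q t - 1) (H0.op v) = 0 := by
        have e5 : H0.op v = S0.Φ (fun t => t * q t) u := by
          rw [hv, hQPhi u]
          exact Phi_op_apply S0 hqm ⟨L, fun t ht => by
            simp only [hqdef]
            simpa using q_decay L t hL ht 1⟩ u
        rw [e5, ← Phi_mul_apply S0 hgm hm_tq]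
        apply Phi_eq_zero S0 (f := fun t => (q t - 1) * (t * q t)) (hgm.mul hm_tq)
        intro t ht
        by_cases hc : t ≤ L
        · simp only [hqdef]; rw [indicator_one_of ht hc]; ring
        · simp only [hqdef]; rw [indicator_zero_of (not_le.1 hc)]; ring
      have e3 : S0.Φ (fun t => q t - 1) ((H0.pert B).op v)
          = S0.Φ (fun t => q t - 1) (B.op v) := by
        rw [hopapply v, map_add, e4, zero_add]
      rw [← sub_add_sub_cancel (S0.Q L ((H0.pert B).op v)) ((H0.pert B).op v)
        ((H0.pert B).op u), e1, e2, e3]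
    rw [hdecomp, map_add]
    apply norm_le_of_inner_Dinf S0
    intro ψ hψ hψ1
    rw [inner_add_left]
    -- ====================== Term I ======================
    have hbd1 : IsBddOne (fun t => t * ((t⁻¹)^s * (q t - 1))) := by
      refine ⟨1, fun t ht => ?_⟩
      simp only [hqdef]; rw [show t * ((t⁻¹)^s * (Set.indicator (Set.Icc (1:ℝ) L)
        (fun _ => (1:ℝ)) t - 1)) = t^1 * (t⁻¹)^s * (Set.indicator (Set.Icc (1:ℝ) L)
        (fun _ => (1:ℝ)) t - 1) by ring]
      exact le_trans (g_decay L t hL ht 1 s (by omega)) (inv_pow_le_one hL _)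
    have hbd0 : IsBddOne (fun t => (t⁻¹)^s * (q t - 1)) := by
      refine ⟨1, fun t ht => ?_⟩
      simp only [hqdef]; rw [show (t⁻¹)^s * (Set.indicator (Set.Icc (1:ℝ) L)
        (fun _ => (1:ℝ)) t - 1) = t^0 * (t⁻¹)^s * (Set.indicator (Set.Icc (1:ℝ) L)
        (fun _ => (1:ℝ)) t - 1) by ring]
      exact le_trans (g_decay L t hL ht 0 s (by omega)) (inv_pow_le_one hL _)
    have hT1 : ‖(⟪(Hinv ^ s) (S0.Φ (fun t => q t - 1) (B.op v)), ψ⟫ : ℂ)‖ ≤ (C+1)/L := by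
      have i1 : (Hinv ^ s) (S0.Φ (fun t => q t - 1) (B.op v))
          = S0.Φ (fun t => (t⁻¹)^s * (q t - 1)) (B.op v) := by
        rw [Hinv_pow_eq S0 hsym0 Hinv hinv_left s, ← Phi_mul_apply S0 hinvs hgm]
      set ξ : 𝓗 := S0.Φ (fun t => (t⁻¹)^s * (q t - 1)) ψ with hξ
      have hξdom : ξ ∈ H0.dom := Phi_mem_dom S0 (hinvs.mul hgm) hbd1 ψ
      have hξD : ξ ∈ H0.Dinf := Phi_mem_Dinf_of_bdd S0 hsym0 (hinvs.mul hgm) hbd0 hψ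
      have i2 : (⟪S0.Φ (fun t => (t⁻¹)^s * (q t - 1)) (B.op v), ψ⟫ : ℂ) = ⟪v, B.op ξ⟫ := by
        rw [S0.Φ_symm, ← hξ]
        exact hBsymm v (hdomB hvdom) ξ (hdomB hξdom)
      have i6 : ‖v‖ ≤ L^k := by
        have e : v = S0.Φ (fun t => t^k * q t) φ := by
          rw [hv, hQPhi u, hu]
          exact Phi_comm_pw S0 hsym0 k q hqm (fun j hj => ⟨L^j, fun t ht => by
            simp only [hqdef]; exact q_decay L t hL ht j⟩) hφ
        rw [e]
        calc ‖S0.Φ (fun t => t^k * q t) φ‖ ≤ L^k * ‖φ‖ :=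
            S0.Φ_norm _ _ (fun t ht => by simp only [hqdef]; exact q_decay L t hL ht k) φ
          _ ≤ L^k := by nlinarith [pow_pos hL0 k, norm_nonneg φ]
      have hξpertD : ξ ∈ (H0.pert B).Dinf := hDH ▸ hξD
      have hHopξD : (H0.pert B).op ξ ∈ H0.Dinf := by
        rw [hDH]; exact Op.Dinf.op_mem hξpertD
      have i9 : ‖(H0.pert B).op ξ‖ ≤ C * ‖H0.pw m ξ‖ := by
        calc ‖(H0.pert B).op ξ‖ = ‖H0.pw 0 ((H0.pert B).op ξ)‖ := by rw [Op.pw_zero_apply]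
          _ ≤ ‖H0.pw (k+1) ((H0.pert B).op ξ)‖ := pw_norm_mono hge hHopξD (Nat.zero_le _)
          _ ≤ C * ‖H0.pw m ξ‖ := hstar ξ hξD
      have i10 : ‖H0.pw m ξ‖ ≤ (L^(k+1))⁻¹ := by
        rw [hξ, Phi_pw_apply S0 m (fun t => (t⁻¹)^s * (q t - 1)) (hinvs.mul hgm) (fun j hj1 hjm => ⟨1, fun t ht => by
          simp only [hqdef]; rw [show t^j * ((t⁻¹)^s * (Set.indicator (Set.Icc (1:ℝ) L)
            (fun _ => (1:ℝ)) t - 1)) = t^j * (t⁻¹)^s * (Set.indicator (Set.Icc (1:ℝ) L)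
            (fun _ => (1:ℝ)) t - 1) by ring]
          exact le_trans (g_decay L t hL ht j s (by omega)) (inv_pow_le_one hL _)⟩) ψ]
        calc ‖S0.Φ (fun t => t^m * ((t⁻¹)^s * (q t - 1))) ψ‖ ≤ (L^(k+1))⁻¹ * ‖ψ‖ :=
            S0.Φ_norm _ _ (fun t ht => by
              simp only [hqdef]; rw [show t^m * ((t⁻¹)^s * (Set.indicator (Set.Icc (1:ℝ) L)
                (fun _ => (1:ℝ)) t - 1)) = t^m * (t⁻¹)^s * (Set.indicator (Set.Icc (1:ℝ) L)
                (fun _ => (1:ℝ)) t - 1) by ring,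
                show k+1 = s - m by omega]
              exact g_decay L t hL ht m s (by omega)) ψ
          _ ≤ (L^(k+1))⁻¹ := by
              have : (0:ℝ) ≤ (L^(k+1))⁻¹ := by positivity
              nlinarith
      have i11 : ‖H0.op ξ‖ ≤ (L^(k+1))⁻¹ := by
        rw [hξ, Phi_op_apply S0 (f := fun t => (t⁻¹)^s * (q t - 1)) (hinvs.mul hgm) hbd1 ψ]
        calc ‖S0.Φ (fun t => t * ((t⁻¹)^s * (q t - 1))) ψ‖ ≤ (L^(k+m))⁻¹ * ‖ψ‖ :=
            S0.Φ_norm _ _ (fun t ht => by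
              simp only [hqdef]; rw [show t * ((t⁻¹)^s * (Set.indicator (Set.Icc (1:ℝ) L)
                (fun _ => (1:ℝ)) t - 1)) = t^1 * (t⁻¹)^s * (Set.indicator (Set.Icc (1:ℝ) L)
                (fun _ => (1:ℝ)) t - 1) by ring,
                show k+m = s - 1 by omega]
              exact g_decay L t hL ht 1 s (by omega)) ψ
          _ ≤ (L^(k+m))⁻¹ := by
              have : (0:ℝ) ≤ (L^(k+m))⁻¹ := by positivity
              nlinarith
          _ ≤ (L^(k+1))⁻¹ := by
              apply inv_anti₀ (by positivity)
              exact pow_le_pow_right₀ hL (by omega)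
      have hBξ : ‖B.op ξ‖ ≤ (C+1) * (L^(k+1))⁻¹ := by
        have e : B.op ξ = (H0.pert B).op ξ - H0.op ξ := by rw [hopapply ξ]; abel
        rw [e]
        calc ‖(H0.pert B).op ξ - H0.op ξ‖ ≤ ‖(H0.pert B).op ξ‖ + ‖H0.op ξ‖ := norm_sub_le _ _
          _ ≤ C * (L^(k+1))⁻¹ + (L^(k+1))⁻¹ := by nlinarith [i9, i10, i11]
          _ = (C+1) * (L^(k+1))⁻¹ := by ring
      calc ‖(⟪(Hinv ^ s) (S0.Φ (fun t => q t - 1) (B.op v)), ψ⟫ : ℂ)‖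
          = ‖(⟪v, B.op ξ⟫ : ℂ)‖ := by rw [i1, i2]
        _ ≤ ‖v‖ * ‖B.op ξ‖ := norm_inner_le_norm _ _
        _ ≤ L^k * ((C+1) * (L^(k+1))⁻¹) :=
            mul_le_mul i6 hBξ (norm_nonneg _) (by positivity)
        _ = (C+1)/L := by
            have hLne : L ≠ 0 := ne_of_gt hL0
            rw [pow_succ]
            field_simp
    -- ====================== Term II ======================
    have hT2 : ‖(⟪(Hinv ^ s) ((H0.pert B).op w), ψ⟫ : ℂ)‖ ≤ (C+2)/L := by
      set η : 𝓗 := S0.Φ (fun t => (t⁻¹)^s) ψ with hη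
      have hbinv : ∀ a : ℕ, a ≤ s → IsBddOne (fun t : ℝ => t^a * (t⁻¹)^s) :=
        fun a ha => ⟨1, fun t ht => invpow_decay t ht a s ha⟩
      have hbinv0 : IsBddOne (fun t : ℝ => (t⁻¹)^s) := by
        refine ⟨1, fun t ht => ?_⟩
        have := invpow_decay t ht 0 s (by omega)
        rw [pow_zero, one_mul] at this
        exact this
      have hbinv1 : IsBddOne (fun t : ℝ => t * (t⁻¹)^s) := by
        refine ⟨1, fun t ht => ?_⟩
        have := invpow_decay t ht 1 s (by omega)
        rw [pow_one] at this
        exact this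
      have hηD : η ∈ H0.Dinf := Phi_mem_Dinf_of_bdd S0 hsym0 hinvs hbinv0 hψ
      have hηdom : η ∈ H0.dom := Op.Dinf.mem_dom hηD
      have ii0 : (⟪(Hinv ^ s) ((H0.pert B).op w), ψ⟫ : ℂ) = ⟪w, (H0.pert B).op η⟫ := by
        rw [Hinv_pow_eq S0 hsym0 Hinv hinv_left s, S0.Φ_symm, ← hη]
        exact hsaH.2.1 w hwdom η hηdom
      have iisplit : (⟪w, (H0.pert B).op η⟫ : ℂ) = ⟪w, H0.op η⟫ + ⟪w, B.op η⟫ := by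
        rw [hopapply η, inner_add_right]
      -- Term II.a
      have iia : ‖(⟪w, H0.op η⟫ : ℂ)‖ ≤ 1/L := by
        have e1 : H0.op η = S0.Φ (fun t => t * (t⁻¹)^s) ψ := by
          rw [hη]; exact Phi_op_apply S0 hinvs hbinv1 ψ
        have e2 : (⟪w, H0.op η⟫ : ℂ) = ⟪S0.Φ (fun t => t * (t⁻¹)^s) w, ψ⟫ := by
          rw [e1, ← S0.Φ_symm]
        have e3 : S0.Φ (fun t => t * (t⁻¹)^s) w
            = S0.Φ (fun t => t^k * (t * (t⁻¹)^s * (q t - 1))) φ := by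
          rw [hw, ← Phi_mul_apply S0 hm_tinv hgm, hu]
          exact Phi_comm_pw S0 hsym0 k (fun t => t * (t⁻¹)^s * (q t - 1)) (hm_tinv.mul hgm)
            (fun j hj => ⟨1, fun t ht => by
              simp only [hqdef]; rw [show t^j * (t * (t⁻¹)^s * (Set.indicator (Set.Icc (1:ℝ) L)
                (fun _ => (1:ℝ)) t - 1)) = t^(j+1) * (t⁻¹)^s * (Set.indicator
                (Set.Icc (1:ℝ) L) (fun _ => (1:ℝ)) t - 1) by ring]
              exact le_trans (g_decay L t hL ht (j+1) s (by omega)) (inv_pow_le_one hL _)⟩) hφ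
        rw [e2, e3]
        calc ‖(⟪S0.Φ (fun t => t^k * (t * (t⁻¹)^s * (q t - 1))) φ, ψ⟫ : ℂ)‖
            ≤ ‖S0.Φ (fun t => t^k * (t * (t⁻¹)^s * (q t - 1))) φ‖ * ‖ψ‖ :=
              norm_inner_le_norm _ _
          _ ≤ ((L^m)⁻¹ * ‖φ‖) * ‖ψ‖ := by
              have hnb := S0.Φ_norm (fun t => t^k * (t * (t⁻¹)^s * (q t - 1))) ((L^m)⁻¹)
                (fun t ht => by
                  simp only [hqdef]; rw [show t^k * (t * (t⁻¹)^s * (Set.indicator (Set.Icc (1:ℝ) L)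
                    (fun _ => (1:ℝ)) t - 1)) = t^(k+1) * (t⁻¹)^s * (Set.indicator
                    (Set.Icc (1:ℝ) L) (fun _ => (1:ℝ)) t - 1) by ring,
                    show m = s - (k+1) by omega]
                  exact g_decay L t hL ht (k+1) s (by omega)) φ
              exact mul_le_mul_of_nonneg_right hnb (norm_nonneg ψ)
          _ ≤ (L^m)⁻¹ := by
              have h1 : (0:ℝ) ≤ (L^m)⁻¹ := by positivity
              calc ((L^m)⁻¹ * ‖φ‖) * ‖ψ‖ ≤ ((L^m)⁻¹ * 1) * 1 :=
                  mul_le_mul (mul_le_mul_of_nonneg_left hφ1 h1) hψ1 (norm_nonneg ψ)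
                    (by positivity)
                _ = (L^m)⁻¹ := by ring
          _ ≤ 1/L := by
              rw [one_div]
              have : (L^1) ≤ L^m := pow_le_pow_right₀ hL hm1
              calc (L^m)⁻¹ ≤ (L^1)⁻¹ := inv_anti₀ (by positivity) this
                _ = L⁻¹ := by rw [pow_one]
      -- Term II.b
      have hηpertD : η ∈ (H0.pert B).Dinf := hDH ▸ hηD
      have hHηD : (H0.pert B).op η ∈ H0.Dinf := by
        rw [hDH]; exact Op.Dinf.op_mem hηpertD
      have hωeq : B.op η = (H0.pert B).op η - H0.op η := by rw [hopapply η]; abel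
      have hωD : B.op η ∈ H0.Dinf := by
        rw [hωeq]; exact Op.Dinf.sub hHηD (Op.Dinf.op_mem hηD)
      have bη1 : ‖H0.pw m η‖ ≤ 1 := by
        rw [hη, Phi_pw_apply S0 m _ hinvs (fun j hj1 hjm => hbinv j (by omega)) ψ]
        calc ‖S0.Φ (fun t => t^m * (t⁻¹)^s) ψ‖ ≤ 1 * ‖ψ‖ :=
            S0.Φ_norm _ _ (fun t ht => invpow_decay t ht m s (by omega)) ψ
          _ ≤ 1 := by rw [one_mul]; exact hψ1
      have bη2 : ‖H0.pw (k+2) η‖ ≤ 1 := by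
        rw [hη, Phi_pw_apply S0 (k+2) _ hinvs (fun j hj1 hjm => hbinv j (by omega)) ψ]
        calc ‖S0.Φ (fun t => t^(k+2) * (t⁻¹)^s) ψ‖ ≤ 1 * ‖ψ‖ :=
            S0.Φ_norm _ _ (fun t ht => invpow_decay t ht (k+2) s (by omega)) ψ
          _ ≤ 1 := by rw [one_mul]; exact hψ1
      have j6 : ‖H0.pw (k+1) (B.op η)‖ ≤ C + 1 := by
        have j7 : H0.pw (k+1) (B.op η)
            = H0.pw (k+1) ((H0.pert B).op η) - H0.pw (k+2) η := by
          rw [hωeq, Op.pw_sub, Op.pw_succ H0 (k+1) η]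
        rw [j7]
        calc ‖H0.pw (k+1) ((H0.pert B).op η) - H0.pw (k+2) η‖
            ≤ ‖H0.pw (k+1) ((H0.pert B).op η)‖ + ‖H0.pw (k+2) η‖ := norm_sub_le _ _
          _ ≤ C * ‖H0.pw m η‖ + ‖H0.pw (k+2) η‖ := add_le_add (hstar η hηD) le_rfl
          _ ≤ C + 1 := by nlinarith [bη1, bη2]
      have iib : ‖(⟪w, B.op η⟫ : ℂ)‖ ≤ (C+1)/L := by
        have hΦqωD : S0.Φ q (B.op η) ∈ H0.Dinf :=
          Phi_mem_Dinf_of_bdd S0 hsym0 hqm ⟨1, fun t _ => hq_le t⟩ hωD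
        have hζD : S0.Φ q (B.op η) - B.op η ∈ H0.Dinf := Op.Dinf.sub hΦqωD hωD
        have j1 : (⟪w, B.op η⟫ : ℂ) = ⟪φ, H0.pw k (S0.Φ q (B.op η) - B.op η)⟫ := by
          rw [hwsub, inner_sub_left, S0.Φ_symm, ← inner_sub_right, hu]
          exact inner_pw_left hsym0 k hφ hζD
        have j4 : B.op η = S0.Φ (fun t => (t⁻¹)^(k+1)) (H0.pw (k+1) (B.op η)) := by
          rw [← Hinv_pow_eq S0 hsym0 Hinv hinv_left,
            Hinv_pw_cancel Hinv hinv_left (k+1) hωD]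
        have j3 : H0.pw k (S0.Φ q (B.op η))
            = S0.Φ (fun t => t^k * q t * (t⁻¹)^(k+1)) (H0.pw (k+1) (B.op η)) := by
          calc H0.pw k (S0.Φ q (B.op η)) = S0.Φ (fun t => t^k * q t) (B.op η) :=
              Phi_pw_apply S0 k q hqm (fun j hj1 hjk => ⟨L^j, fun t ht => by
                simp only [hqdef]; exact q_decay L t hL ht j⟩) (B.op η)
            _ = S0.Φ (fun t => t^k * q t)
                (S0.Φ (fun t => (t⁻¹)^(k+1)) (H0.pw (k+1) (B.op η))) := by rw [← j4]
            _ = S0.Φ (fun t => t^k * q t * (t⁻¹)^(k+1)) (H0.pw (k+1) (B.op η)) := by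
                rw [← Phi_mul_apply S0 hm_tkq hm_invk1]
        have j5 : H0.pw k (B.op η) = S0.Φ (fun t => t⁻¹) (H0.pw (k+1) (B.op η)) := by
          rw [Op.pw_succ' H0 k (B.op η),
            dom_inv_eq S0 hsym0 (Op.Dinf.mem_dom (Op.Dinf.pw_mem hωD k))]
        have j2 : H0.pw k (S0.Φ q (B.op η) - B.op η)
            = S0.Φ (fun t => t^k * q t * (t⁻¹)^(k+1) - t⁻¹) (H0.pw (k+1) (B.op η)) := by
          rw [Op.pw_sub, j3, j5,
            Phi_sub_apply S0 (f := fun t => t^k * q t * (t⁻¹)^(k+1)) (hm_tkq.mul hm_invk1) measurable_inv]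
        rw [j1, j2]
        calc ‖(⟪φ, S0.Φ (fun t => t^k * q t * (t⁻¹)^(k+1) - t⁻¹)
              (H0.pw (k+1) (B.op η))⟫ : ℂ)‖
            ≤ ‖φ‖ * ‖S0.Φ (fun t => t^k * q t * (t⁻¹)^(k+1) - t⁻¹)
              (H0.pw (k+1) (B.op η))‖ := norm_inner_le_norm _ _
          _ ≤ 1 * (L⁻¹ * ‖H0.pw (k+1) (B.op η)‖) := by
              have hnb := S0.Φ_norm (fun t => t^k * q t * (t⁻¹)^(k+1) - t⁻¹) L⁻¹
                (fun t ht => by simp only [hqdef]; exact qinv_decay L t hL ht k)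
                (H0.pw (k+1) (B.op η))
              exact mul_le_mul hφ1 hnb (norm_nonneg _) (by norm_num)
          _ ≤ 1 * (L⁻¹ * (C+1)) := by
              have h1 : (0:ℝ) ≤ L⁻¹ := by positivity
              rw [one_mul, one_mul]
              exact mul_le_mul_of_nonneg_left j6 h1
          _ = (C+1)/L := by rw [one_mul]; ring
      calc ‖(⟪(Hinv ^ s) ((H0.pert B).op w), ψ⟫ : ℂ)‖
          = ‖(⟪w, H0.op η⟫ : ℂ) + ⟪w, B.op η⟫‖ := by rw [ii0, iisplit]
        _ ≤ ‖(⟪w, H0.op η⟫ : ℂ)‖ + ‖(⟪w, B.op η⟫ : ℂ)‖ := norm_add_le _ _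
        _ ≤ 1/L + (C+1)/L := add_le_add iia iib
        _ = (C+2)/L := by ring
    calc ‖(⟪(Hinv ^ s) (S0.Φ (fun t => q t - 1) (B.op v)), ψ⟫ : ℂ)
          + ⟪(Hinv ^ s) ((H0.pert B).op w), ψ⟫‖
        ≤ ‖(⟪(Hinv ^ s) (S0.Φ (fun t => q t - 1) (B.op v)), ψ⟫ : ℂ)‖
          + ‖(⟪(Hinv ^ s) ((H0.pert B).op w), ψ⟫ : ℂ)‖ := norm_add_le _ _
      _ ≤ (C+1)/L + (C+2)/L := add_le_add hT1 hT2
      _ = (2*C+3)/L := by ring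
  -- conclude by squeezing
  apply squeeze_zero' (g := fun L : ℝ => (2*C+3)/L)
  · exact Filter.Eventually.of_forall fun L => opNormOn_nonneg _ _
  · filter_upwards [Filter.eventually_ge_atTop (1:ℝ)] with L hL
    exact opNormOn_le _ _ (div_nonneg (by linarith) (by linarith)) (hmain L hL)
  · have h0 : Filter.Tendsto (fun r : ℝ => r⁻¹) Filter.atTop (nhds 0) :=
      tendsto_inv_atTop_zero
    simpa [div_eq_mul_inv] using h0.const_mul (2*C+3)

end Paper
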